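/- Let M be a finite free Ẑ-module with a decomposition M = ⊕_{i=1}^n M_i into nonzero finite free Ẑ-submodules, and let T ⊆ Aut_Ẑ(M) be a closed subgroup of generalized homotheties with respect to this decomposition (every φ ∈ T preserves each M_i and acts on it by a homothety) which is full: for each i the image T_i ⊆ Ẑ^× of T has finite coexponent and the kernel of T ↠ T_i has finite exponent. Then H^0(T, M ⊗_Ẑ ℚ/ℤ) is finite and H^1(T, M ⊗_Ẑ ℚ/ℤ) has finite exponent. -/

import Mathlib

open scoped DirectSum

instance (p : Nat.Primes) : Fact (p : ℕ).Prime := ⟨p.2⟩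

/-- The profinite completion `Ẑ` of `ℤ`, realized (via CRT) as the product of all rings
of `p`-adic integers. -/
abbrev Zhat : Type := ∀ p : Nat.Primes, ℤ_[(p : ℕ)]

/-- `ℤ_p` as a submodule of `ℚ_p`. -/
noncomputable def Zp (p : Nat.Primes) : Submodule ℤ_[(p : ℕ)] ℚ_[(p : ℕ)] :=
  LinearMap.range (Algebra.linearMap ℤ_[(p : ℕ)] ℚ_[(p : ℕ)])

/-- The `p`-primary component `ℚ_p/ℤ_p` of `ℚ/ℤ`. -/
abbrev QmodZp (p : Nat.Primes) := ℚ_[(p : ℕ)] ⧸ Zp p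

/-- `ℚ_p/ℤ_p` is a module over `Ẑ` via the projection `Ẑ → ℤ_p`. -/
noncomputable instance (p : Nat.Primes) : Module Zhat (QmodZp p) :=
  Module.compHom _ (Pi.evalRingHom (fun p : Nat.Primes => ℤ_[(p : ℕ)]) p)

/-- `ℚ/ℤ ≅ ⨁_p ℚ_p/ℤ_p` as a module over `Ẑ`; the units `Ẑˣ` act by homotheties. -/
abbrev QZ : Type := ⨁ p : Nat.Primes, QmodZp p

open TensorProduct

/-- Let `M` be a finite free `Ẑ`-module with a decomposition
`M = ⊕_{i=1}^n M_i` into nonzero finite free submodules, and let `T ⊆ Aut_Ẑ(M)` be a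
closed subgroup of generalized homotheties with respect to this decomposition (each
`t ∈ T` acts on `M_i` by the scalar `χ i t ∈ Ẑˣ`), which is full: each image
`T_i = (χ i).range` has finite coexponent in `Ẑˣ` and each kernel `ker (χ i)` has finite
exponent.  Then `H⁰(T, M ⊗ ℚ/ℤ)` is finite and `H¹(T, M ⊗ ℚ/ℤ)` has finite exponent.
(`T` carries the topology induced by the scalars; cohomology classes are represented by
locally constant cocycles with values in the discrete module `M ⊗ ℚ/ℤ`.) -/

lemma aux_padic_nat_isUnit (p : ℕ) [Fact p.Prime] (c : ℕ) (hc : ¬ p ∣ c) :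
    IsUnit (c : ℤ_[p]) := by
  rw [PadicInt.isUnit_iff]
  have h1 : ‖(c : ℤ_[p])‖ ≤ 1 := PadicInt.norm_le_one _
  rcases eq_or_lt_of_le h1 with h | h
  · exact h
  · exfalso
    have : ((c : ℤ) : ℤ_[p]) = (c : ℤ_[p]) := by push_cast; ring
    rw [← this] at h
    rw [PadicInt.norm_int_lt_one_iff_dvd] at h
    exact hc (by exact_mod_cast h)

lemma aux_nat_dvd_pow_self (p : ℕ) [hp : Fact p.Prime] (m : ℕ) (hm : 0 < m) :
    (m : ℤ_[p]) ∣ (p : ℤ_[p]) ^ m := by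
  set k := m.factorization p with hk
  have hord : p ^ k * (m / p ^ k) = m := Nat.ordProj_mul_ordCompl_eq_self m p
  have hcop : ¬ p ∣ (m / p ^ k) := Nat.not_dvd_ordCompl hp.1 hm.ne'
  have hku : IsUnit ((m / p ^ k : ℕ) : ℤ_[p]) := aux_padic_nat_isUnit p _ hcop
  have hkm : k ≤ m := by
    calc k ≤ p ^ k := Nat.le_of_lt (Nat.lt_pow_self (n := k) hp.1.one_lt)
    _ ≤ m := Nat.ordProj_le p hm.ne'
  have h2 : (m : ℤ_[p]) = (p : ℤ_[p]) ^ k * ((m / p ^ k : ℕ) : ℤ_[p]) := by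
    conv_lhs => rw [← hord]
    push_cast
    ring
  rw [h2]
  have h3 : (p : ℤ_[p]) ^ m = (p : ℤ_[p]) ^ k * (p : ℤ_[p]) ^ (m - k) := by
    rw [← pow_add]; congr 1; omega
  rw [h3]
  exact mul_dvd_mul dvd_rfl (hku.dvd)

lemma aux_torsion_QmodZp_finite (p : Nat.Primes) (m : ℕ) (hm : 0 < m) :
    {y : QmodZp p | m • y = 0}.Finite := by
  haveI : NeZero ((p : ℕ) ^ m) := ⟨pow_ne_zero _ p.2.pos.ne'⟩
  set g : ZMod ((p : ℕ) ^ m) → QmodZp p :=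
    fun c => Submodule.Quotient.mk ((c.val : ℚ_[(p : ℕ)]) / (m : ℚ_[(p : ℕ)])) with hg
  apply Set.Finite.subset (Set.finite_range g)
  intro y hy
  simp only [Set.mem_setOf_eq] at hy
  obtain ⟨q, rfl⟩ := Submodule.Quotient.mk_surjective _ y
  -- m • mk q = mk (m • q)
  have h1 : (m : ℚ_[(p : ℕ)]) * q ∈ Zp p := by
    have : ((m : ℤ_[(p : ℕ)]) • (Submodule.Quotient.mk q : QmodZp p)) = m • (Submodule.Quotient.mk q : QmodZp p) :=
      Nat.cast_smul_eq_nsmul _ _ _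
    rw [← this, ← Submodule.Quotient.mk_smul] at hy
    have := (Submodule.Quotient.mk_eq_zero (Zp p)).mp hy
    simpa [Algebra.smul_def] using this
  obtain ⟨a, ha⟩ := h1
  set c := PadicInt.toZModPow m a with hc
  refine ⟨c, ?_⟩
  rw [hg]
  rw [Submodule.Quotient.eq]
  -- c.val / m - q ∈ Zp
  have hmq : (m : ℚ_[(p:ℕ)]) ≠ 0 := by
    exact_mod_cast Nat.cast_ne_zero.mpr hm.ne'
  have hker : a - ((c.val : ℕ) : ℤ_[(p:ℕ)]) ∈ RingHom.ker (PadicInt.toZModPow (p := (p:ℕ)) m) := by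
    simp only [RingHom.mem_ker, map_sub, map_natCast, hc]
    rw [ZMod.natCast_val, ZMod.cast_id]
    ring
  rw [PadicInt.ker_toZModPow] at hker
  rw [Ideal.mem_span_singleton] at hker
  have hdvd : (m : ℤ_[(p:ℕ)]) ∣ a - ((c.val : ℕ) : ℤ_[(p:ℕ)]) :=
    dvd_trans (aux_nat_dvd_pow_self (p:ℕ) m hm) hker
  obtain ⟨b, hb⟩ := hdvd
  refine ⟨-b, ?_⟩
  have halg : (algebraMap ℤ_[(p:ℕ)] ℚ_[(p:ℕ)]) a = (m : ℚ_[(p:ℕ)]) * q := by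
    simpa [Algebra.smul_def] using ha
  simp only [Algebra.linearMap_apply, map_neg, PadicInt.algebraMap_apply]
  have hb' : ((a : ℚ_[(p:ℕ)]) - (c.val : ℚ_[(p:ℕ)])) = (m : ℚ_[(p:ℕ)]) * (b : ℚ_[(p:ℕ)]) := by
    have := congrArg (fun z : ℤ_[(p:ℕ)] => (z : ℚ_[(p:ℕ)])) hb
    push_cast at this
    exact this
  have ha' : (a : ℚ_[(p:ℕ)]) = (m : ℚ_[(p:ℕ)]) * q := by
    rw [← halg, PadicInt.algebraMap_apply]
  field_simp
  linear_combination hb' - ha'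

lemma aux_torsion_QmodZp_trivial (p : Nat.Primes) (m : ℕ) (hp : ¬ (p : ℕ) ∣ m)
    (y : QmodZp p) (hy : m • y = 0) : y = 0 := by
  have hu : IsUnit ((m : ℕ) : ℤ_[(p:ℕ)]) := aux_padic_nat_isUnit (p:ℕ) m hp
  have h1 : ((m : ℕ) : ℤ_[(p:ℕ)]) • y = 0 := by
    rw [Nat.cast_smul_eq_nsmul]; exact hy
  calc y = ((↑hu.unit⁻¹ * ((m : ℕ) : ℤ_[(p:ℕ)])) : ℤ_[(p:ℕ)]) • y := by
        rw [hu.val_inv_mul, one_smul]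
  _ = ((↑hu.unit⁻¹ : ℤ_[(p:ℕ)])) • ((((m : ℕ) : ℤ_[(p:ℕ)])) • y) := mul_smul _ _ _
  _ = 0 := by rw [h1, smul_zero]

lemma aux_torsion_QZ_finite (m : ℕ) (hm : 0 < m) : {x : QZ | m • x = 0}.Finite := by
  classical
  haveI hfin : Finite {p : Nat.Primes // (p : ℕ) ∣ m} := by
    apply Finite.of_injective (fun q : {p : Nat.Primes // (p : ℕ) ∣ m} =>
      (⟨(q.1 : ℕ), Nat.lt_succ_of_le (Nat.le_of_dvd hm q.2)⟩ : Fin (m + 1)))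
    intro q q' h
    have : (q.1 : ℕ) = (q'.1 : ℕ) := congrArg Fin.val h
    exact Subtype.ext (Nat.Primes.coe_nat_injective this)
  haveI := Fintype.ofFinite {p : Nat.Primes // (p : ℕ) ∣ m}
  haveI : ∀ q : {p : Nat.Primes // (p : ℕ) ∣ m},
      Finite {y : QmodZp q.1 | m • y = 0} := fun q =>
    (aux_torsion_QmodZp_finite q.1 m hm).to_subtype
  set G : (∀ q : {p : Nat.Primes // (p : ℕ) ∣ m}, {y : QmodZp q.1 | m • y = 0}) → QZ :=
    fun y => ∑ q : {p : Nat.Primes // (p : ℕ) ∣ m},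
      DirectSum.of (fun p : Nat.Primes => QmodZp p) q.1 (y q : QmodZp q.1) with hG
  apply Set.Finite.subset (Set.finite_range G)
  intro x hx
  simp only [Set.mem_setOf_eq] at hx
  have hcomp : ∀ p : Nat.Primes, m • (x p) = 0 := by
    intro p
    have h1 : (DFinsupp.evalAddMonoidHom (β := fun p : Nat.Primes => QmodZp p) p) (m • x)
        = m • (DFinsupp.evalAddMonoidHom (β := fun p : Nat.Primes => QmodZp p) p) x :=
      AddMonoidHom.map_nsmul _ _ _
    rw [hx, map_zero] at h1
    exact h1.symm
  refine ⟨fun q => ⟨x q.1, hcomp q.1⟩, ?_⟩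
  rw [hG]
  apply DFinsupp.ext
  intro p
  rcases Classical.em ((p : ℕ) ∣ m) with hp | hp
  · rw [DFinsupp.finset_sum_apply]
    rw [Finset.sum_eq_single (⟨p, hp⟩ : {p : Nat.Primes // (p : ℕ) ∣ m})]
    · exact DirectSum.of_eq_same p _
    · intro q _ hq
      exact DirectSum.of_eq_of_ne _ _ _ (fun h => hq (Subtype.ext h.symm))
    · intro h
      exact absurd (Finset.mem_univ _) h
  · rw [DFinsupp.finset_sum_apply]
    rw [Finset.sum_eq_zero]
    · exact (aux_torsion_QmodZp_trivial p m hp (x p) (hcomp p)).symm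
    · intro q _
      exact DirectSum.of_eq_of_ne _ _ _ (fun h => hp (h ▸ q.2))

lemma aux_torsion_tensor_finite (M : Type) [AddCommGroup M] [Module Zhat M]
    [Module.Free Zhat M] [Module.Finite Zhat M] (m : ℕ) (hm : 0 < m) :
    {x : M ⊗[Zhat] QZ | m • x = 0}.Finite := by
  classical
  set ι := Module.Free.ChooseBasisIndex Zhat M
  set b : Module.Basis ι Zhat M := Module.Free.chooseBasis Zhat M
  set e : M ⊗[Zhat] QZ ≃ₗ[Zhat] (ι → QZ) :=
    (LinearEquiv.rTensor QZ b.equivFun).trans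
      ((TensorProduct.comm Zhat (ι → Zhat) QZ).trans
        ((TensorProduct.piRight Zhat Zhat QZ (fun _ : ι => Zhat)).trans
          (LinearEquiv.piCongrRight fun _ : ι => TensorProduct.rid Zhat QZ))) with he
  have hsub : {x : M ⊗[Zhat] QZ | m • x = 0} ⊆
      e ⁻¹' (Set.pi Set.univ fun _ : ι => {z : QZ | m • z = 0}) := by
    intro x hx
    simp only [Set.mem_setOf_eq] at hx
    intro i _
    have h1 : e (m • x) = m • e x := map_nsmul e.toAddMonoidHom m x
    rw [hx, map_zero] at h1
    have h2 : (m • e x) i = m • (e x i) := rfl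
    simp only [Set.mem_setOf_eq]
    rw [← h2, ← h1]
    rfl
  apply Set.Finite.subset _ hsub
  apply Set.Finite.preimage (e.injective.injOn)
  exact Set.Finite.pi fun _ => aux_torsion_QZ_finite m hm

lemma aux_pi_isUnit {ι : Type*} {R : ι → Type*} [∀ i, Monoid (R i)] {a : ∀ i, R i}
    (h : ∀ i, IsUnit (a i)) : IsUnit a :=
  ⟨⟨a, fun i => ((h i).unit⁻¹ : _), funext fun i => (h i).mul_val_inv,
    funext fun i => (h i).val_inv_mul⟩, rfl⟩


set_option maxHeartbeats 2000000 in
theorem h0_finite_and_h1_finite_exponent_of_full_generalized_homotheties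
    (M : Type) [AddCommGroup M] [Module Zhat M] [Module.Free Zhat M] [Module.Finite Zhat M]
    (n : ℕ) (hn : 0 < n) (Msub : Fin n → Submodule Zhat M)
    (hinternal : DirectSum.IsInternal Msub)
    (hnonzero : ∀ i, Msub i ≠ ⊥)
    (hfree : ∀ i, Module.Free Zhat (Msub i))
    (T : Subgroup (M ≃ₗ[Zhat] M))
    (χ : Fin n → (T →* (Zhat)ˣ))
    -- each `t ∈ T` acts on `M_i` as the homothety by `χ i t`:
    (hhomothety : ∀ (t : T) (i : Fin n), ∀ x ∈ Msub i,
      (t : M ≃ₗ[Zhat] M) x = (χ i t : Zhat) • x)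
    -- `T` is closed (in the topology of the scalars through which it acts):
    (hT_closed : IsClosed (Set.range fun t : T => fun i : Fin n => χ i t))
    -- fullness: each `T_i` has finite coexponent …
    (hcoexp : ∀ i : Fin n, ∃ d : ℕ, 0 < d ∧ ∀ u : (Zhat)ˣ, u ^ d ∈ (χ i).range)
    -- … and each kernel `T ↠ T_i` has finite exponent:
    (hker : ∀ i : Fin n, ∃ e : ℕ, 0 < e ∧ ∀ t ∈ (χ i).ker, t ^ e = 1) :
    ({x : M ⊗[Zhat] QZ | ∀ t : T,
        LinearMap.rTensor QZ ((t : M ≃ₗ[Zhat] M) : M →ₗ[Zhat] M) x = x}.Finite) ∧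
      (∃ m : ℕ, 0 < m ∧ ∀ f : T → M ⊗[Zhat] QZ,
        (letI : TopologicalSpace T :=
          TopologicalSpace.induced (fun t : T => fun i : Fin n => χ i t) inferInstance
         IsLocallyConstant f) →
        (∀ t t' : T, f (t * t') =
          f t + LinearMap.rTensor QZ ((t : M ≃ₗ[Zhat] M) : M →ₗ[Zhat] M) (f t')) →
        ∃ x : M ⊗[Zhat] QZ, ∀ t : T,
          m • f t = LinearMap.rTensor QZ ((t : M ≃ₗ[Zhat] M) : M →ₗ[Zhat] M) x - x) := by
  classical
  -- the projections onto the pieces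
  set e := LinearEquiv.ofBijective (DirectSum.coeLinearMap Msub) hinternal with he
  set π : Fin n → (M →ₗ[Zhat] M) := fun j =>
    (Msub j).subtype ∘ₗ (DirectSum.component Zhat (Fin n) (fun i => (Msub i : Type)) j)
      ∘ₗ e.symm.toLinearMap with hπ
  have hπ_apply : ∀ j x, π j x = ((e.symm x) j : M) := fun j x => rfl
  have hmem : ∀ j x, π j x ∈ Msub j := fun j x => (e.symm x j).2
  have hproj : ∀ j x, x ∈ Msub j → π j x = x := by
    intro j x hx
    rw [hπ_apply, hinternal.ofBijective_coeLinearMap_of_mem hx]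
  have hproj0 : ∀ i j, i ≠ j → ∀ x, x ∈ Msub i → π j x = 0 := by
    intro i j hij x hx
    rw [hπ_apply, hinternal.ofBijective_coeLinearMap_of_mem_ne hij hx]
    rfl
  have hsum : (∑ j, π j) = LinearMap.id (R := Zhat) (M := M) := by
    apply LinearMap.ext
    intro x
    rw [LinearMap.sum_apply, LinearMap.id_apply]
    have h1 : (DirectSum.coeLinearMap Msub) (e.symm x) = x := by
      have := e.apply_symm_apply x
      exact this
    calc ∑ j, π j x
        = ∑ j, (DirectSum.coeLinearMap Msub)
            (DirectSum.of (fun i => (Msub i : Type)) j ((e.symm x) j)) := by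
          apply Finset.sum_congr rfl
          intro j _
          rw [DirectSum.coeLinearMap_of, hπ_apply]
      _ = (DirectSum.coeLinearMap Msub) (∑ j, DirectSum.of (fun i => (Msub i : Type)) j ((e.symm x) j)) :=
          (map_sum _ _ _).symm
      _ = x := by rw [DirectSum.sum_univ_of, h1]
  have hxsum : ∀ x : M, x = ∑ j, π j x := by
    intro x
    conv_lhs => rw [← LinearMap.id_apply (R := Zhat) x, ← hsum]
    rw [LinearMap.sum_apply]
  have htπ : ∀ (t : T) j x, (t : M ≃ₗ[Zhat] M) (π j x) = (χ j t : Zhat) • π j x :=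
    fun t j x => hhomothety t j _ (hmem j x)
  have hπt : ∀ (t : T) j x, π j ((t : M ≃ₗ[Zhat] M) x) = (χ j t : Zhat) • π j x := by
    intro t j x
    conv_lhs => rw [hxsum x]
    rw [map_sum, map_sum]
    rw [Finset.sum_eq_single j]
    · rw [htπ, map_smul, hproj j _ (hmem j x)]
    · intro k _ hkj
      rw [htπ, map_smul, hproj0 k j hkj _ (hmem k x), smul_zero]
    · intro h; exact absurd (Finset.mem_univ _) h
  -- decomposition of the action
  have hdecomp : ∀ (t : T) (x : M), (t : M ≃ₗ[Zhat] M) x = ∑ k, (χ k t : Zhat) • π k x := by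
    intro t x
    conv_lhs => rw [hxsum x]
    rw [map_sum]
    exact Finset.sum_congr rfl fun k _ => htπ t k _
  -- T is commutative
  have habel : ∀ t t' : T, t * t' = t' * t := by
    intro t t'
    apply Subtype.ext
    apply LinearEquiv.ext
    intro x
    show (t : M ≃ₗ[Zhat] M) ((t' : M ≃ₗ[Zhat] M) x) = (t' : M ≃ₗ[Zhat] M) ((t : M ≃ₗ[Zhat] M) x)
    rw [hdecomp t', map_sum, hdecomp t, map_sum]
    apply Finset.sum_congr rfl
    intro k _
    rw [map_smul, map_smul, htπ, htπ, smul_smul, smul_smul, mul_comm]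
  -- the auxiliary unit
  set a : Zhat := fun p => ((if (p : ℕ) = 2 then 3 else 2 : ℕ) : ℤ_[(p : ℕ)]) with ha
  have hu : IsUnit a := by
    apply aux_pi_isUnit
    intro p
    by_cases hp : (p : ℕ) = 2
    · rw [ha]; simp only [hp, if_true]
      apply aux_padic_nat_isUnit
      rw [hp]; omega
    · rw [ha]; simp only [hp, if_false]
      apply aux_padic_nat_isUnit
      intro hdvd
      exact hp ((Nat.prime_dvd_prime_iff_eq p.2 Nat.prime_two).mp hdvd)
  set u : (Zhat)ˣ := hu.unit with hudef
  have huval : (u : Zhat) = a := hu.unit_spec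
  -- the data from fullness
  choose d hd hsurj using hcoexp
  have hs : ∀ i, ∃ s : T, χ i s = u ^ d i := fun i => hsurj i u
  choose s hsval using hs
  set mi : Fin n → ℕ := fun i => (2 ^ d i - 1) * (3 ^ d i - 1) with hmi_def
  have hmi : ∀ i, 0 < mi i := by
    intro i
    have h2 : 1 < 2 ^ d i := Nat.one_lt_two_pow_iff.mpr (hd i).ne'
    have h3 : 1 < 3 ^ d i := Nat.one_lt_pow (hd i).ne' (by omega)
    exact Nat.mul_pos (by omega) (by omega)
  -- divisibility witnesses
  have hcompdvd : ∀ i (p : Nat.Primes), ∃ wp : ℤ_[(p : ℕ)],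
      ((a p) ^ d i - 1) * wp = ((mi i : ℕ) : ℤ_[(p : ℕ)]) := by
    intro i p
    have hcast : ∀ c : ℕ, 1 ≤ c →
        ((c : ℤ_[(p : ℕ)]) ^ d i - 1) = (((c ^ d i - 1 : ℕ)) : ℤ_[(p : ℕ)]) := by
      intro c hc
      have h1 : 1 ≤ c ^ d i := Nat.one_le_pow _ _ hc
      push_cast [Nat.cast_sub h1]
      ring
    by_cases hp : (p : ℕ) = 2
    · rw [ha]; simp only [hp, if_true]
      rw [hcast 3 (by omega)]
      have : (3 ^ d i - 1 : ℕ) ∣ mi i := Dvd.intro_left _ rfl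
      obtain ⟨wp, hwp⟩ := Nat.cast_dvd_cast (α := ℤ_[(p : ℕ)]) this
      exact ⟨wp, hwp.symm⟩
    · rw [ha]; simp only [hp, if_false]
      rw [hcast 2 (by omega)]
      have : (2 ^ d i - 1 : ℕ) ∣ mi i := Dvd.intro _ rfl
      obtain ⟨wp, hwp⟩ := Nat.cast_dvd_cast (α := ℤ_[(p : ℕ)]) this
      exact ⟨wp, hwp.symm⟩
  have hwex : ∀ i, ∃ w : Zhat, ((u : Zhat) ^ d i - 1) * w = ((mi i : ℕ) : Zhat) := by
    intro i
    refine ⟨fun p => (hcompdvd i p).choose, ?_⟩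
    funext p
    have := (hcompdvd i p).choose_spec
    show (((u : Zhat) ^ d i - 1) p) * _ = _
    rw [huval]
    simpa using this
  choose w hwval using hwex
  set mm : ℕ := ∏ i, mi i with hmm_def
  have hmm : 0 < mm := Finset.prod_pos fun i _ => hmi i
  have hdvdmm : ∀ i, mi i ∣ mm := fun i => Finset.dvd_prod_of_mem _ (Finset.mem_univ i)
  -- π j ∘ s j = u^{d j} • π j as linear maps
  have hπs : ∀ j, (π j) ∘ₗ ((s j : M ≃ₗ[Zhat] M) : M →ₗ[Zhat] M)
      = ((u : Zhat) ^ d j) • π j := by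
    intro j
    apply LinearMap.ext
    intro x
    show π j ((s j : M ≃ₗ[Zhat] M) x) = ((u : Zhat) ^ d j • π j) x
    rw [LinearMap.smul_apply, hπt (s j) j x, hsval j, Units.val_pow_eq_pow_val]
  have hπcommt : ∀ (t : T) j, (π j) ∘ₗ ((t : M ≃ₗ[Zhat] M) : M →ₗ[Zhat] M)
      = ((t : M ≃ₗ[Zhat] M) : M →ₗ[Zhat] M) ∘ₗ (π j) := by
    intro t j
    apply LinearMap.ext
    intro x
    show π j ((t : M ≃ₗ[Zhat] M) x) = (t : M ≃ₗ[Zhat] M) (π j x)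
    rw [hπt, htπ]
  -- key torsion step
  have hkey : ∀ (j : Fin n) (z v : M ⊗[Zhat] QZ),
      (((u : Zhat) ^ d j - 1) • z = v) → mm • z = (mm / mi j) • (w j • v) := by
    intro j z v hv
    have h1 : ((mi j : ℕ) : Zhat) • z = w j • v := by
      rw [← hwval j, mul_comm, mul_smul, hv]
    have h2 : (mi j : ℕ) • z = w j • v := by
      rw [← Nat.cast_smul_eq_nsmul Zhat]; exact h1
    have h4 : mm • z = (mm / mi j) • ((mi j) • z) := by
      rw [← mul_smul, Nat.div_mul_cancel (hdvdmm j)]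
    rw [h4, h2]
  have hsmulsub : ∀ (c : Zhat) (z : M ⊗[Zhat] QZ), (c - 1) • z = c • z - z := by
    intro c z
    have h := sub_smul c (1 : Zhat) z
    rw [one_smul] at h
    exact h
  -- summing the projections on the tensor product
  have hrsum : ∀ z : M ⊗[Zhat] QZ, ∑ j, LinearMap.rTensor QZ (π j) z = z := by
    have h1 : LinearMap.rTensor QZ (∑ j, π j) = ∑ j, LinearMap.rTensor QZ (π j) := by
      simp only [← LinearMap.coe_rTensorHom]
      exact map_sum _ _ _
    intro z
    calc ∑ j, LinearMap.rTensor QZ (π j) z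
        = (∑ j, LinearMap.rTensor QZ (π j)) z := (LinearMap.sum_apply _ _ _).symm
      _ = LinearMap.rTensor QZ (∑ j, π j) z := by rw [h1]
      _ = z := by rw [hsum, LinearMap.rTensor_id, LinearMap.id_apply]
  constructor
  · -- H⁰ is finite
    apply Set.Finite.subset (aux_torsion_tensor_finite M mm hmm)
    intro x hx
    simp only [Set.mem_setOf_eq] at hx ⊢
    set y : Fin n → M ⊗[Zhat] QZ := fun j => LinearMap.rTensor QZ (π j) x with hy
    have hy1 : ∀ j, ((u : Zhat) ^ d j) • y j = y j := by
      intro j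
      have h1 := congrArg (LinearMap.rTensor QZ (π j)) (hx (s j))
      rw [← LinearMap.rTensor_comp_apply, hπs j, LinearMap.rTensor_smul,
        LinearMap.smul_apply] at h1
      exact h1
    have hy2 : ∀ j, mm • y j = 0 := by
      intro j
      have hz : ((u : Zhat) ^ d j - 1) • y j = 0 := by
        rw [hsmulsub, hy1 j, sub_self]
      rw [hkey j (y j) 0 hz, smul_zero, smul_zero]
    calc mm • x = mm • ∑ j, y j := by rw [hrsum x]
      _ = ∑ j, mm • y j := Finset.smul_sum
      _ = 0 := Finset.sum_eq_zero fun j _ => hy2 j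
  · -- H¹ has exponent dividing mm
    refine ⟨mm, hmm, ?_⟩
    intro f _ hcoc
    have hgdef : True := trivial
    have hkey2 : ∀ (t : T) j, mm • (LinearMap.rTensor QZ (π j) (f t)) =
        LinearMap.rTensor QZ ((t : M ≃ₗ[Zhat] M) : M →ₗ[Zhat] M)
            ((mm / mi j) • (w j • (LinearMap.rTensor QZ (π j) (f (s j))))) - (mm / mi j) • (w j • (LinearMap.rTensor QZ (π j) (f (s j)))) := by
      intro t j
      have hA : LinearMap.rTensor QZ (π j) (f (s j * t))
          = LinearMap.rTensor QZ (π j) (f (s j))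
            + (u : Zhat) ^ d j • LinearMap.rTensor QZ (π j) (f t) := by
        rw [hcoc (s j) t, map_add]
        congr 1
        rw [← LinearMap.rTensor_comp_apply, hπs j, LinearMap.rTensor_smul,
          LinearMap.smul_apply]
      have hB : LinearMap.rTensor QZ (π j) (f (s j * t))
          = LinearMap.rTensor QZ (π j) (f t)
            + LinearMap.rTensor QZ ((t : M ≃ₗ[Zhat] M) : M →ₗ[Zhat] M)
                (LinearMap.rTensor QZ (π j) (f (s j))) := by
        rw [habel (s j) t, hcoc t (s j), map_add]
        congr 1
        rw [← LinearMap.rTensor_comp_apply, hπcommt t j, LinearMap.rTensor_comp_apply]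
      have h3 := hA.symm.trans hB
      have h4 : ((u : Zhat) ^ d j - 1) • (LinearMap.rTensor QZ (π j) (f t))
          = LinearMap.rTensor QZ ((t : M ≃ₗ[Zhat] M) : M →ₗ[Zhat] M) ((LinearMap.rTensor QZ (π j) (f (s j)))) - (LinearMap.rTensor QZ (π j) (f (s j))) := by
        rw [hsmulsub, sub_eq_sub_iff_add_eq_add]
        conv_lhs => rw [add_comm]
        rw [h3]
        exact add_comm _ _
      rw [hkey j _ _ h4]
      simp only [map_nsmul, map_smul, smul_sub]
    refine ⟨∑ j, (mm / mi j) • (w j • (LinearMap.rTensor QZ (π j) (f (s j)))), ?_⟩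
    intro t
    rw [map_sum, ← Finset.sum_sub_distrib]
    calc mm • f t = mm • ∑ j, LinearMap.rTensor QZ (π j) (f t) := by rw [hrsum]
      _ = ∑ j, mm • LinearMap.rTensor QZ (π j) (f t) := Finset.smul_sum
      _ = _ := Finset.sum_congr rfl fun j _ => hkey2 t j
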